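/- Let (u_n) be a (exact) greedy sequence in 𝒦, i.e., a weak greedy sequence with weakness parameter γ = 1. Then for all n ≥ 1, σ_n(𝒦)_H ≤ (2^{n+1}/√3) · d_n(𝒦)_H. -/

import Mathlib

open Metric
open scoped RealInnerProductSpace
open InnerProductSpace

variable {H : Type*} [NormedAddCommGroup H] [InnerProductSpace ℝ H] [CompleteSpace H]

/-- `greedySpace u n = H_n := span{u_1, …, u_n}` (with `u i` denoting `u_{i+1}`). -/
noncomputable def greedySpace (u : ℕ → H) (n : ℕ) : Submodule ℝ H :=
  Submodule.span ℝ (u '' {i | i < n})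

/-- Greedy error `σ_n(𝒦)_H := sup_{v∈𝒦} dist(v, H_n)`. -/
noncomputable def greedyErr (K : Set H) (u : ℕ → H) (n : ℕ) : ℝ :=
  ⨆ v : K, infDist (v : H) (greedySpace u n : Set H)

/-- A weak greedy sequence in `𝒦` with weakness parameter `γ`:
`dist(u_{n+1}, H_n) ≥ γ · sup_{v∈𝒦} dist(v, H_n)` for all `n ≥ 0`. -/
def IsWeakGreedy (K : Set H) (u : ℕ → H) (γ : ℝ) : Prop :=
  (∀ n, u n ∈ K) ∧
    ∀ n, γ * greedyErr K u n ≤ infDist (u n) (greedySpace u n : Set H)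

/-- Kolmogorov `n`-width
`d_n(𝒦)_H := inf {sup_{v∈𝒦} dist(v, V) : V ⊂ H subspace, dim V ≤ n}`. -/
noncomputable def kolWidth (K : Set H) (n : ℕ) : ℝ :=
  ⨅ V : {V : Submodule ℝ H // FiniteDimensional ℝ V ∧ Module.finrank ℝ V ≤ n},
    ⨆ v : K, infDist (v : H) ((V : Submodule ℝ H) : Set H)

private lemma bdd_infDist {K : Set H} (hK : IsCompact K) (S : Set H) :
    BddAbove (Set.range fun v : K => infDist (v : H) S) := by
  obtain ⟨M, hM⟩ := (hK.image (continuous_infDist_pt S)).bddAbove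
  refine ⟨M, ?_⟩
  rintro x ⟨v, rfl⟩
  exact hM ⟨v, v.2, rfl⟩

private lemma infDist_le_sup {K : Set H} (hK : IsCompact K) (S : Set H)
    {v : H} (hv : v ∈ K) :
    infDist v S ≤ ⨆ w : K, infDist (w : H) S :=
  le_ciSup (bdd_infDist hK S) (⟨v, hv⟩ : K)

private lemma greedySpace_subset (u : ℕ → H) {m n : ℕ} (h : m ≤ n) :
    (greedySpace u m : Set H) ⊆ (greedySpace u n : Set H) := by
  apply SetLike.coe_subset_coe.mpr
  exact Submodule.span_mono (Set.image_mono (f := u) fun i hi => lt_of_lt_of_le hi h)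

private lemma greedyErr_anti {K : Set H} (hK : IsCompact K) (hne : K.Nonempty)
    (u : ℕ → H) {m n : ℕ} (h : m ≤ n) :
    greedyErr K u n ≤ greedyErr K u m := by
  haveI : Nonempty K := hne.to_subtype
  exact ciSup_mono (bdd_infDist hK _) fun v =>
    infDist_le_infDist_of_subset (greedySpace_subset u h) ⟨0, (greedySpace u m).zero_mem⟩

private lemma le_infDist' {s : Set H} (hs : s.Nonempty) {x : H} {b : ℝ}
    (h : ∀ y ∈ s, b ≤ dist x y) : b ≤ infDist x s := by
  by_contra hlt
  push_neg at hlt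
  obtain ⟨y, hy, hdy⟩ := (infDist_lt_iff hs).mp hlt
  exact absurd (h y hy) (by linarith)

private lemma core {K : Set H} (hK : IsCompact K) {u : ℕ → H}
    (hwg : IsWeakGreedy K u 1) (n : ℕ) (V : Submodule ℝ H)
    (hfd : FiniteDimensional ℝ V) (hrk : Module.finrank ℝ V ≤ n)
    (hσ : 0 < greedyErr K u n) {d : ℝ}
    (hd : ∀ v ∈ K, infDist v (V : Set H) < d) :
    greedyErr K u n * Real.sqrt 3 ≤ 2 ^ (n + 1) * d := by
  classical
  have hmem : ∀ i, u i ∈ K := hwg.1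
  have hne : K.Nonempty := ⟨u 0, hmem 0⟩
  set σ := greedyErr K u n with hσdef
  set g : ℕ → H := gramSchmidt ℝ u with hg
  set e : ℕ → H := gramSchmidtNormed ℝ u with he
  have hdpos : 0 < d := lt_of_le_of_lt infDist_nonneg (hd (u 0) (hmem 0))
  -- σ ≤ greedyErr j for j ≤ n
  have hσj : ∀ j, j ≤ n → σ ≤ greedyErr K u j := fun j hj => greedyErr_anti hK hne u hj
  -- u j - g j ∈ H_j
  have hsub : ∀ j, u j - g j ∈ greedySpace u j := by
    intro j
    have h1 : u j - g j =
        ∑ i ∈ Finset.Iio j, (ℝ ∙ g i).starProjection (u j) := by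
      rw [hg, gramSchmidt_def ℝ u j]; abel
    rw [h1]
    refine Submodule.sum_mem _ fun i hi => ?_
    have hij : i < j := Finset.mem_Iio.mp hi
    have hgi : g i ∈ greedySpace u j := by
      have := gramSchmidt_mem_span (𝕜 := ℝ) u (le_refl i)
      refine Submodule.span_mono (Set.image_mono (f := u) ?_) this
      intro k hk
      exact lt_of_le_of_lt hk hij
    have : (ℝ ∙ g i) ≤ greedySpace u j := (Submodule.span_singleton_le_iff_mem _ _).mpr hgi
    exact this (Submodule.starProjection_apply_mem _ _)
  -- g j ⟂ H_j
  have horthg : ∀ j, ∀ w ∈ greedySpace u j, ⟪w, g j⟫ = 0 := by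
    intro j w hw
    induction hw using Submodule.span_induction with
    | mem x hx =>
      obtain ⟨i, hi, rfl⟩ := hx
      rw [real_inner_comm]
      exact gramSchmidt_inv_triangular ℝ u hi
    | zero => simp
    | add x y _ _ hx hy => rw [inner_add_left, hx, hy, add_zero]
    | smul c x _ hx => rw [real_inner_smul_left, hx, mul_zero]
  have horthe : ∀ j, ∀ w ∈ greedySpace u j, ⟪w, e j⟫ = 0 := by
    intro j w hw
    rw [he]
    show ⟪w, gramSchmidtNormed ℝ u j⟫ = 0
    rw [gramSchmidtNormed, real_inner_smul_right]
    rw [show gramSchmidt ℝ u j = g j from rfl, horthg j w hw, mul_zero]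
  -- infDist (u j) H_j ≤ ‖g j‖
  have hinf_le : ∀ j, infDist (u j) (greedySpace u j : Set H) ≤ ‖g j‖ := by
    intro j
    have h2 : dist (u j) (u j - g j) = ‖g j‖ := by
      rw [dist_eq_norm]; simp
    calc infDist (u j) (greedySpace u j : Set H) ≤ dist (u j) (u j - g j) :=
          infDist_le_dist_of_mem (hsub j)
      _ = ‖g j‖ := h2
  -- σ ≤ ‖g j‖ for j ≤ n, so g j ≠ 0
  have hglb : ∀ j, j ≤ n → σ ≤ ‖g j‖ := by
    intro j hj
    have h1 := hwg.2 j
    rw [one_mul] at h1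
    exact le_trans (hσj j hj) (le_trans h1 (hinf_le j))
  have hgne : ∀ j, j ≤ n → g j ≠ 0 := by
    intro j hj h0
    have h1 := hglb j hj
    rw [h0, norm_zero] at h1
    exact hσ.not_ge h1
  have hene : ∀ j, j ≤ n → e j ≠ 0 := by
    intro j hj
    rw [he]
    show gramSchmidtNormed ℝ u j ≠ 0
    rw [gramSchmidtNormed]
    simp only [ne_eq, smul_eq_zero, not_or]
    refine ⟨?_, hgne j hj⟩
    simpa [norm_eq_zero] using hgne j hj
  have hnorme : ∀ j, j ≤ n → ‖e j‖ = 1 := fun j hj =>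
    gramSchmidtNormed_unit_length' (hene j hj)
  -- ⟪u j, e j⟫ = ‖g j‖
  have hdiag : ∀ j, j ≤ n → ⟪u j, e j⟫ = ‖g j‖ := by
    intro j hj
    have h1 : ⟪u j - g j, e j⟫ = 0 := horthe j _ (hsub j)
    have h2 : ⟪u j, e j⟫ = ⟪g j, e j⟫ := by
      have := inner_sub_left (𝕜 := ℝ) (u j) (g j) (e j)
      rw [h1] at this
      linarith [this]
    rw [h2, he]
    show ⟪g j, gramSchmidtNormed ℝ u j⟫ = ‖g j‖
    rw [gramSchmidtNormed, real_inner_smul_right, real_inner_self_eq_norm_sq]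
    have : ‖gramSchmidt ℝ u j‖ = ‖g j‖ := rfl
    rw [this]
    field_simp [norm_eq_zero, hgne j hj]
    simp
  -- |⟪u i, e j⟫| ≤ ‖g j‖ for i, j ≤ n
  have hoffd : ∀ i j, j ≤ n → |⟪u i, e j⟫| ≤ greedyErr K u j := by
    intro i j hj
    have h1 : ∀ w ∈ (greedySpace u j : Set H), |⟪u i, e j⟫| ≤ dist (u i) w := by
      intro w hw
      have h2 : ⟪u i, e j⟫ = ⟪u i - w, e j⟫ := by
        rw [inner_sub_left, horthe j w hw, sub_zero]
      rw [h2, dist_eq_norm]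
      calc |⟪u i - w, e j⟫| ≤ ‖u i - w‖ * ‖e j‖ := abs_real_inner_le_norm _ _
        _ = ‖u i - w‖ := by rw [hnorme j hj, mul_one]
    have h3 : |⟪u i, e j⟫| ≤ infDist (u i) (greedySpace u j : Set H) :=
      le_infDist' ⟨0, (greedySpace u j).zero_mem⟩ h1
    exact h3.trans (infDist_le_sup hK _ (hmem i))
  have hoffd' : ∀ i j, j ≤ n → |⟪u i, e j⟫| ≤ ‖g j‖ := by
    intro i j hj
    refine (hoffd i j hj).trans ?_
    have h1 := hwg.2 j
    rw [one_mul] at h1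
    exact h1.trans (hinf_le j)
  -- vanishing above diagonal
  have hupper : ∀ i j, i < j → ⟪u i, e j⟫ = 0 := by
    intro i j hij
    exact horthe j (u i) (Submodule.subset_span ⟨i, hij, rfl⟩)
  -- e i ⟂ e j
  have heorth : ∀ i j, i ≠ j → ⟪e i, e j⟫ = 0 := by
    intro i j hij
    rw [he]
    show ⟪gramSchmidtNormed ℝ u i, gramSchmidtNormed ℝ u j⟫ = 0
    rw [gramSchmidtNormed, gramSchmidtNormed, real_inner_smul_left, real_inner_smul_right,
      gramSchmidt_orthogonal ℝ u hij, mul_zero, mul_zero]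
  -- F := greedySpace u (n+1) has finrank ≥ n+1
  haveI hFfin : FiniteDimensional ℝ (greedySpace u (n + 1)) :=
    FiniteDimensional.span_of_finite ℝ ((Set.finite_Iio (n + 1)).image u)
  have hememF : ∀ j, j ≤ n → e j ∈ greedySpace u (n + 1) := by
    intro j hj
    have h1 : g j ∈ Submodule.span ℝ (u '' Set.Iic j) :=
      gramSchmidt_mem_span (𝕜 := ℝ) u (le_refl j)
    have h2 : g j ∈ greedySpace u (n + 1) := by
      refine Submodule.span_mono (Set.image_mono (f := u) ?_) h1
      intro k hk
      exact lt_of_le_of_lt (le_trans hk hj) (Nat.lt_succ_self n)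
    rw [he]
    show gramSchmidtNormed ℝ u j ∈ greedySpace u (n + 1)
    rw [gramSchmidtNormed]
    exact Submodule.smul_mem _ _ h2
  have honb : Orthonormal ℝ (fun j : Fin (n + 1) => e (j : ℕ)) := by
    constructor
    · intro j
      exact hnorme j (Nat.lt_succ_iff.mp j.2)
    · intro i j hij
      exact heorth i j (fun h => hij (Fin.ext h))
  have hrankF : n + 1 ≤ Module.finrank ℝ (greedySpace u (n + 1)) := by
    have li0 : LinearIndependent ℝ (fun j : Fin (n + 1) => e (j : ℕ)) :=
      honb.linearIndependent
    have li : LinearIndependent ℝ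
        (fun j : Fin (n + 1) =>
          (⟨e (j : ℕ), hememF j (Nat.lt_succ_iff.mp j.2)⟩ : greedySpace u (n + 1))) := by
      apply LinearIndependent.of_comp (greedySpace u (n + 1)).subtype
      exact li0
    simpa using li.fintype_card_le_finrank
  -- find unit φ ∈ F orthogonal to V
  obtain ⟨φ, hφF, hφ1, hφV⟩ :
      ∃ φ : H, φ ∈ greedySpace u (n + 1) ∧ ‖φ‖ = 1 ∧ ∀ v ∈ V, ⟪v, φ⟫ = 0 := by
    haveI : CompleteSpace V := FiniteDimensional.complete ℝ V
    let T : greedySpace u (n + 1) →ₗ[ℝ] V :=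
      (V.orthogonalProjectionOnto).toLinearMap.comp (greedySpace u (n + 1)).subtype
    have hker : LinearMap.ker T ≠ ⊥ := by
      intro h
      have hinj : Function.Injective T := LinearMap.ker_eq_bot.mp h
      have := LinearMap.finrank_le_finrank_of_injective hinj
      omega
    obtain ⟨ψ, hψker, hψne⟩ := (Submodule.ne_bot_iff _).mp hker
    have hψ0 : V.orthogonalProjectionOnto ((ψ : H)) = 0 := LinearMap.mem_ker.mp hψker
    have hψperp : (ψ : H) ∈ Vᗮ := Submodule.orthogonalProjectionOnto_eq_zero_iff.mp hψ0
    have hψH : (ψ : H) ≠ 0 := fun h => hψne (Subtype.ext h)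
    refine ⟨‖(ψ : H)‖⁻¹ • (ψ : H),
      Submodule.smul_mem _ _ ψ.2, norm_smul_inv_norm hψH, ?_⟩
    intro v hv
    rw [real_inner_smul_right, (Submodule.mem_orthogonal V (ψ : H)).mp hψperp v hv, mul_zero]
  -- Fourier coefficients
  set c : ℕ → ℝ := fun j => ⟪e j, φ⟫ with hc
  -- φ = ∑ c j • e j
  have hrep : φ = ∑ j ∈ Finset.range (n + 1), c j • e j := by
    set ψ' : H := φ - ∑ j ∈ Finset.range (n + 1), c j • e j with hψ'
    have hψ'F : ψ' ∈ greedySpace u (n + 1) := by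
      refine Submodule.sub_mem _ hφF (Submodule.sum_mem _ fun j hj => ?_)
      exact Submodule.smul_mem _ _ (hememF j (Nat.lt_succ_iff.mp (Finset.mem_range.mp hj)))
    have hperp : ∀ j, j ≤ n → ⟪e j, ψ'⟫ = 0 := by
      intro j hj
      rw [hψ', inner_sub_right, inner_sum]
      have hsum : ∑ k ∈ Finset.range (n + 1), ⟪e j, c k • e k⟫ = c j := by
        rw [Finset.sum_eq_single j]
        · rw [real_inner_smul_right, real_inner_self_eq_norm_sq, hnorme j hj]
          ring
        · intro k _ hk
          rw [real_inner_smul_right, heorth j k (Ne.symm hk), mul_zero]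
        · intro h
          exact absurd (Finset.mem_range.mpr (Nat.lt_succ_iff.mpr hj)) h
      rw [hsum, hc]
      simp
    have hFspan : greedySpace u (n + 1) =
        Submodule.span ℝ (gramSchmidtNormed ℝ u '' Set.Iio (n + 1)) := by
      rw [span_gramSchmidtNormed, span_gramSchmidt_Iio]
      rfl
    have hallperp : ∀ w ∈ greedySpace u (n + 1), ⟪w, ψ'⟫ = 0 := by
      intro w hw
      rw [hFspan] at hw
      induction hw using Submodule.span_induction with
      | mem x hx =>
        obtain ⟨i, hi, rfl⟩ := hx
        have : (i : ℕ) ≤ n := Nat.lt_succ_iff.mp hi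
        exact hperp i this
      | zero => simp
      | add x y _ _ hx hy => rw [inner_add_left, hx, hy, add_zero]
      | smul a x _ hx => rw [real_inner_smul_left, hx, mul_zero]
    have h0 : ⟪ψ', ψ'⟫ = 0 := hallperp ψ' hψ'F
    have h1 : ψ' = 0 := inner_self_eq_zero.mp h0
    rw [hψ'] at h1
    exact (sub_eq_zero.mp h1)
  -- Parseval
  have hpars : ∑ j ∈ Finset.range (n + 1), c j ^ 2 = 1 := by
    have h1 : ⟪φ, (∑ j ∈ Finset.range (n + 1), c j • e j : H)⟫ = ⟪φ, φ⟫ := by rw [← hrep]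
    rw [inner_sum] at h1
    have h2 : ∀ j ∈ Finset.range (n + 1), ⟪φ, c j • e j⟫ = c j ^ 2 := by
      intro j hj
      have h3 : ⟪φ, e j⟫ = c j := real_inner_comm _ _
      rw [real_inner_smul_right, h3]
      ring
    rw [Finset.sum_congr rfl h2] at h1
    rw [h1, real_inner_self_eq_norm_sq, hφ1]
    norm_num
  -- the inner products with φ are small
  have hr : ∀ i, |⟪u i, φ⟫| ≤ d := by
    intro i
    obtain ⟨y, hy, hdy⟩ := (infDist_lt_iff ⟨0, V.zero_mem⟩).mp (hd (u i) (hmem i))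
    have h1 : ⟪u i, φ⟫ = ⟪u i - y, φ⟫ := by
      rw [inner_sub_left, hφV y hy, sub_zero]
    rw [h1]
    calc |⟪u i - y, φ⟫| ≤ ‖u i - y‖ * ‖φ‖ := abs_real_inner_le_norm _ _
      _ = dist (u i) y := by rw [hφ1, mul_one, dist_eq_norm]
      _ ≤ d := hdy.le
  -- triangular expansion
  have hexp : ∀ i, i ≤ n → ⟪u i, φ⟫ = ∑ j ∈ Finset.range (i + 1), c j * ⟪u i, e j⟫ := by
    intro i hi
    have h1 : ⟪u i, φ⟫ = ∑ j ∈ Finset.range (n + 1), c j * ⟪u i, e j⟫ := by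
      conv_lhs => rw [hrep]
      rw [inner_sum]
      exact Finset.sum_congr rfl fun j _ => by rw [real_inner_smul_right]
    rw [h1]
    symm
    apply Finset.sum_subset
    · intro j hj
      exact Finset.mem_range.mpr (lt_of_lt_of_le (Finset.mem_range.mp hj) (by omega))
    · intro j hj hnj
      have hj1 := Finset.mem_range.mp hj
      have hij : i < j := by
        by_contra hcon
        exact hnj (Finset.mem_range.mpr (by omega))
      rw [hupper i j hij, mul_zero]
  -- the key recursion
  have hrec : ∀ i, i ≤ n → ‖g i‖ * |c i| ≤ 2 ^ i * d := by
    intro i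
    induction i using Nat.strong_induction_on with
    | _ i ih =>
    intro hi
    have hsplit : ‖g i‖ * c i = ⟪u i, φ⟫ - ∑ j ∈ Finset.range i, c j * ⟪u i, e j⟫ := by
      have h1 := hexp i hi
      rw [Finset.sum_range_succ, hdiag i hi] at h1
      linarith [h1]
    have habs : ‖g i‖ * |c i| = |‖g i‖ * c i| := by
      rw [abs_mul, abs_of_nonneg (norm_nonneg _)]
    rw [habs, hsplit]
    have hsum : |∑ j ∈ Finset.range i, c j * ⟪u i, e j⟫| ≤
        ∑ j ∈ Finset.range i, (2 : ℝ) ^ j * d := by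
      calc |∑ j ∈ Finset.range i, c j * ⟪u i, e j⟫|
          ≤ ∑ j ∈ Finset.range i, |c j * ⟪u i, e j⟫| := Finset.abs_sum_le_sum_abs _ _
        _ ≤ ∑ j ∈ Finset.range i, (2 : ℝ) ^ j * d := by
            apply Finset.sum_le_sum
            intro j hj
            have hji : j < i := Finset.mem_range.mp hj
            have hjn : j ≤ n := le_trans (Nat.le_of_lt hji) hi
            rw [abs_mul]
            calc |c j| * |⟪u i, e j⟫| ≤ |c j| * ‖g j‖ :=
                  mul_le_mul_of_nonneg_left (hoffd' i j hjn) (abs_nonneg _)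
              _ = ‖g j‖ * |c j| := mul_comm _ _
              _ ≤ 2 ^ j * d := ih j hji hjn
    have hgeom : ∑ j ∈ Finset.range i, (2 : ℝ) ^ j * d = (2 ^ i - 1) * d := by
      rw [← Finset.sum_mul, geom_sum_eq (by norm_num : (2 : ℝ) ≠ 1)]
      norm_num
    calc |⟪u i, φ⟫ - ∑ j ∈ Finset.range i, c j * ⟪u i, e j⟫|
        ≤ |⟪u i, φ⟫| + |∑ j ∈ Finset.range i, c j * ⟪u i, e j⟫| := by
          have h := abs_add_le (⟪u i, φ⟫) (-(∑ j ∈ Finset.range i, c j * ⟪u i, e j⟫))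
          simpa [sub_eq_add_neg, abs_neg] using h
      _ ≤ d + (2 ^ i - 1) * d := by
          have h1 := hr i
          rw [hgeom] at hsum
          linarith
      _ = 2 ^ i * d := by ring
  -- sum up
  have hσle : ∀ j, j ≤ n → σ * |c j| ≤ 2 ^ j * d := fun j hj =>
    le_trans (mul_le_mul_of_nonneg_right (hglb j hj) (abs_nonneg _)) (hrec j hj)
  have hsq : σ ^ 2 * 3 ≤ (2 ^ (n + 1) * d) ^ 2 := by
    have h1 : σ ^ 2 = σ ^ 2 * ∑ j ∈ Finset.range (n + 1), c j ^ 2 := by rw [hpars, mul_one]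
    have h2 : σ ^ 2 * (∑ j ∈ Finset.range (n + 1), c j ^ 2) ≤
        ∑ j ∈ Finset.range (n + 1), (4 : ℝ) ^ j * d ^ 2 := by
      rw [Finset.mul_sum]
      apply Finset.sum_le_sum
      intro j hj
      have hjn : j ≤ n := Nat.lt_succ_iff.mp (Finset.mem_range.mp hj)
      have h3 : (σ * |c j|) ^ 2 ≤ ((2 : ℝ) ^ j * d) ^ 2 :=
        pow_le_pow_left₀ (by positivity) (hσle j hjn) 2
      have h4 : ((2 : ℝ) ^ j) ^ 2 = (4 : ℝ) ^ j := by
        rw [← pow_mul, mul_comm, pow_mul]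
        norm_num
      calc σ ^ 2 * c j ^ 2 = (σ * |c j|) ^ 2 := by rw [mul_pow, sq_abs]
        _ ≤ ((2 : ℝ) ^ j * d) ^ 2 := h3
        _ = (4 : ℝ) ^ j * d ^ 2 := by rw [mul_pow, h4]
    have h4 : ∑ j ∈ Finset.range (n + 1), (4 : ℝ) ^ j * d ^ 2 =
        (4 ^ (n + 1) - 1) / 3 * d ^ 2 := by
      rw [← Finset.sum_mul, geom_sum_eq (by norm_num : (4 : ℝ) ≠ 1)]
      norm_num
    have h5 : σ ^ 2 ≤ (4 ^ (n + 1) - 1) / 3 * d ^ 2 := by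
      rw [h1]
      rw [h4] at h2
      exact h2
    have h6 : ((4 : ℝ)) ^ (n + 1) = ((2 : ℝ) ^ (n + 1)) ^ 2 := by
      rw [← pow_mul, mul_comm, pow_mul]
      norm_num
    nlinarith [sq_nonneg d]
  have h7 : σ * Real.sqrt 3 = Real.sqrt (σ ^ 2 * 3) := by
    rw [Real.sqrt_mul (sq_nonneg σ), Real.sqrt_sq hσ.le]
  have h8 : (0 : ℝ) ≤ 2 ^ (n + 1) * d := by positivity
  rw [h7]
  calc Real.sqrt (σ ^ 2 * 3) ≤ Real.sqrt ((2 ^ (n + 1) * d) ^ 2) := Real.sqrt_le_sqrt hsq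
    _ = 2 ^ (n + 1) * d := Real.sqrt_sq h8

theorem greedy_direct_comparison
    (K : Set H) (hK : IsCompact K) (u : ℕ → H)
    (hwg : IsWeakGreedy K u 1) :
    ∀ n : ℕ, 1 ≤ n →
      greedyErr K u n ≤ (2 ^ (n + 1) / Real.sqrt 3) * kolWidth K n := by
  intro n hn
  have hmem := hwg.1
  haveI : Nonempty K := ⟨⟨u 0, hmem 0⟩⟩
  have hs3 : (0 : ℝ) < Real.sqrt 3 := Real.sqrt_pos.mpr (by norm_num)
  have hC : (0 : ℝ) < 2 ^ (n + 1) / Real.sqrt 3 := by positivity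
  haveI : Nonempty {V : Submodule ℝ H // FiniteDimensional ℝ V ∧ Module.finrank ℝ V ≤ n} :=
    ⟨⟨⊥, inferInstance, by simp⟩⟩
  have hkw : 0 ≤ kolWidth K n := by
    apply le_ciInf
    intro V
    exact Real.iSup_nonneg fun v => infDist_nonneg
  by_cases hσ : greedyErr K u n ≤ 0
  · calc greedyErr K u n ≤ 0 := hσ
      _ ≤ (2 ^ (n + 1) / Real.sqrt 3) * kolWidth K n := mul_nonneg hC.le hkw
  · push_neg at hσ
    have key : ∀ V : Submodule ℝ H, FiniteDimensional ℝ V → Module.finrank ℝ V ≤ n →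
        greedyErr K u n ≤ (2 ^ (n + 1) / Real.sqrt 3) *
          ⨆ v : K, infDist (v : H) (V : Set H) := by
      intro V hfd hrk
      set δ := ⨆ v : K, infDist (v : H) (V : Set H) with hδ
      have hstep : ∀ d, δ < d → greedyErr K u n * Real.sqrt 3 ≤ 2 ^ (n + 1) * d := by
        intro d hdgt
        apply core hK hwg n V hfd hrk hσ
        intro v hv
        exact lt_of_le_of_lt (infDist_le_sup hK _ hv) hdgt
      set a := greedyErr K u n * Real.sqrt 3 with ha
      have hlim : a ≤ 2 ^ (n + 1) * δ := by
        by_contra hlt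
        push_neg at hlt
        have h2 : (0 : ℝ) < 2 ^ (n + 1) := by positivity
        have hδa : δ < a / 2 ^ (n + 1) := by
          rw [lt_div_iff₀ h2]
          linarith
        have hcancel : (2 : ℝ) ^ (n + 1) * (a / 2 ^ (n + 1)) = a := by field_simp
        have hd1 : δ < (δ + a / 2 ^ (n + 1)) / 2 := by linarith
        have h3 := hstep _ hd1
        nlinarith
      rw [div_mul_eq_mul_div, le_div_iff₀ hs3]
      calc greedyErr K u n * Real.sqrt 3 = a := ha.symm
        _ ≤ 2 ^ (n + 1) * δ := hlim
    have hdiv : greedyErr K u n / (2 ^ (n + 1) / Real.sqrt 3) ≤ kolWidth K n := by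
      apply le_ciInf
      rintro ⟨V, hfd, hrk⟩
      rw [div_le_iff₀ hC]
      calc greedyErr K u n ≤ (2 ^ (n + 1) / Real.sqrt 3) *
            ⨆ v : K, infDist (v : H) (V : Set H) := key V hfd hrk
        _ = (⨆ v : K, infDist (v : H) (V : Set H)) * (2 ^ (n + 1) / Real.sqrt 3) :=
            mul_comm _ _
    have := (div_le_iff₀ hC).mp hdiv
    calc greedyErr K u n ≤ kolWidth K n * (2 ^ (n + 1) / Real.sqrt 3) := this
      _ = (2 ^ (n + 1) / Real.sqrt 3) * kolWidth K n := mul_comm _ _
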